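/- Let L > 0, let r ∈ ℝ³ be a constant vector, and let m : [0,L] → ℝ³ be twice continuously differentiable with m'(0) = m'(L) = 0. Then ∫₀ᴸ (m(x) − r) · (m(x) × m''(x)) dx = 0. (The paper's Lemma 3.5.) -/

import Mathlib

open RealInnerProductSpace

/-- Cross product on `ℝ³ = EuclideanSpace ℝ (Fin 3)`. -/
noncomputable def cross3 (u v : EuclideanSpace ℝ (Fin 3)) : EuclideanSpace ℝ (Fin 3) :=
  (WithLp.equiv 2 (Fin 3 → ℝ)).symm
    ![u 1 * v 2 - u 2 * v 1, u 2 * v 0 - u 0 * v 2, u 0 * v 1 - u 1 * v 0]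

lemma inner_cross3 (w u v : EuclideanSpace ℝ (Fin 3)) :
    ⟪w, cross3 u v⟫ = w 0 * (u 1 * v 2 - u 2 * v 1) + w 1 * (u 2 * v 0 - u 0 * v 2)
      + w 2 * (u 0 * v 1 - u 1 * v 0) := by
  simp [cross3, PiLp.inner_apply, Fin.sum_univ_three, RCLike.inner_apply]
  ring

/-- Lemma 3.5: For `m : [0,L] → ℝ³` twice continuously differentiable with
`m'(0) = m'(L) = 0` and any constant `r ∈ ℝ³`,
`∫₀ᴸ (m − r) · (m × m'') dx = 0`. -/
theorem integral_shifted_dot_cross_second_deriv_eq_zero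
    (L : ℝ) (hL : 0 < L) (r : EuclideanSpace ℝ (Fin 3))
    (m : ℝ → EuclideanSpace ℝ (Fin 3)) (hm : ContDiff ℝ 2 m)
    (hb0 : deriv m 0 = 0) (hbL : deriv m L = 0) :
    ∫ x in (0 : ℝ)..L, ⟪m x - r, cross3 (m x) (deriv (deriv m) x)⟫ = 0 := by
  have h2 : ContDiff ℝ ((1 : ℕ∞) + 1) m := by exact_mod_cast hm
  have hm1 : Differentiable ℝ m := (contDiff_succ_iff_deriv.mp h2).1
  have hdmc : ContDiff ℝ 1 (deriv m) := (contDiff_succ_iff_deriv.mp h2).2.2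
  have hdm1 : Differentiable ℝ (deriv m) := hdmc.differentiable one_ne_zero
  have hddc : Continuous (deriv (deriv m)) := (contDiff_one_iff_deriv.mp hdmc).2
  -- component functions
  set p : Fin 3 → ℝ → ℝ := fun i y => m y i with hpdef
  set q : Fin 3 → ℝ → ℝ := fun i y => deriv m y i with hqdef
  set s : Fin 3 → ℝ → ℝ := fun i y => deriv (deriv m) y i with hsdef
  have hp : ∀ i x, HasDerivAt (p i) (q i x) x := by
    intro i x
    simpa [hpdef, hqdef, Function.comp_def] using
      ((EuclideanSpace.proj i : EuclideanSpace ℝ (Fin 3) →L[ℝ] ℝ)).hasFDerivAt.comp_hasDerivAt x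
        (hm1 x).hasDerivAt
  have hq : ∀ i x, HasDerivAt (q i) (s i x) x := by
    intro i x
    simpa [hqdef, hsdef, Function.comp_def] using
      ((EuclideanSpace.proj i : EuclideanSpace ℝ (Fin 3) →L[ℝ] ℝ)).hasFDerivAt.comp_hasDerivAt x
        (hdm1 x).hasDerivAt
  -- scalar form of integrand
  have hform : ∀ (g : ℝ → EuclideanSpace ℝ (Fin 3)) (y : ℝ),
      ⟪m y - r, cross3 (m y) (g y)⟫
        = (p 0 y - r 0) * (p 1 y * g y 2 - p 2 y * g y 1)
          + (p 1 y - r 1) * (p 2 y * g y 0 - p 0 y * g y 2)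
          + (p 2 y - r 2) * (p 0 y * g y 1 - p 1 y * g y 0) := by
    intro g y
    rw [inner_cross3]
    simp [hpdef]
  have hGkey : ∀ x : ℝ, HasDerivAt (fun y => ⟪m y - r, cross3 (m y) (deriv m y)⟫)
      (⟪m x - r, cross3 (m x) (deriv (deriv m) x)⟫) x := by
    intro x
    have hD : HasDerivAt (fun y =>
        (p 0 y - r 0) * (p 1 y * q 2 y - p 2 y * q 1 y)
          + (p 1 y - r 1) * (p 2 y * q 0 y - p 0 y * q 2 y)
          + (p 2 y - r 2) * (p 0 y * q 1 y - p 1 y * q 0 y))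
        (q 0 x * (p 1 x * q 2 x - p 2 x * q 1 x)
            + (p 0 x - r 0) * ((q 1 x * q 2 x + p 1 x * s 2 x) - (q 2 x * q 1 x + p 2 x * s 1 x))
          + (q 1 x * (p 2 x * q 0 x - p 0 x * q 2 x)
            + (p 1 x - r 1) * ((q 2 x * q 0 x + p 2 x * s 0 x) - (q 0 x * q 2 x + p 0 x * s 2 x)))
          + (q 2 x * (p 0 x * q 1 x - p 1 x * q 0 x)
            + (p 2 x - r 2) * ((q 0 x * q 1 x + p 0 x * s 1 x) - (q 1 x * q 0 x + p 1 x * s 0 x)))) x := by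
      exact ((((hp 0 x).sub_const (r 0)).mul (((hp 1 x).mul (hq 2 x)).sub
            ((hp 2 x).mul (hq 1 x)))).add
          ((((hp 1 x).sub_const (r 1)).mul (((hp 2 x).mul (hq 0 x)).sub
            ((hp 0 x).mul (hq 2 x)))))).add
          ((((hp 2 x).sub_const (r 2)).mul (((hp 0 x).mul (hq 1 x)).sub
            ((hp 1 x).mul (hq 0 x)))))
    have heq : (fun y => ⟪m y - r, cross3 (m y) (deriv m y)⟫) = (fun y =>
        (p 0 y - r 0) * (p 1 y * q 2 y - p 2 y * q 1 y)
          + (p 1 y - r 1) * (p 2 y * q 0 y - p 0 y * q 2 y)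
          + (p 2 y - r 2) * (p 0 y * q 1 y - p 1 y * q 0 y)) := by
      funext y; exact hform (deriv m) y
    rw [heq, hform (deriv (deriv m)) x]
    convert hD using 1
    ring
  have hcont : Continuous (fun x => ⟪m x - r, cross3 (m x) (deriv (deriv m) x)⟫) := by
    have hpc : ∀ i, Continuous (p i) := fun i =>
      (EuclideanSpace.proj i : EuclideanSpace ℝ (Fin 3) →L[ℝ] ℝ).continuous.comp hm.continuous
    have hsc : ∀ i, Continuous (s i) := fun i =>
      (EuclideanSpace.proj i : EuclideanSpace ℝ (Fin 3) →L[ℝ] ℝ).continuous.comp hddc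
    have heq : (fun y => ⟪m y - r, cross3 (m y) (deriv (deriv m) y)⟫) = (fun y =>
        (p 0 y - r 0) * (p 1 y * s 2 y - p 2 y * s 1 y)
          + (p 1 y - r 1) * (p 2 y * s 0 y - p 0 y * s 2 y)
          + (p 2 y - r 2) * (p 0 y * s 1 y - p 1 y * s 0 y)) := by
      funext y; exact hform (deriv (deriv m)) y
    rw [heq]
    exact ((((hpc 0).sub continuous_const).mul (((hpc 1).mul (hsc 2)).sub ((hpc 2).mul (hsc 1)))).add
      (((hpc 1).sub continuous_const).mul (((hpc 2).mul (hsc 0)).sub ((hpc 0).mul (hsc 2))))).add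
      (((hpc 2).sub continuous_const).mul (((hpc 0).mul (hsc 1)).sub ((hpc 1).mul (hsc 0))))
  have hint := intervalIntegral.integral_eq_sub_of_hasDerivAt
    (f := fun y => ⟪m y - r, cross3 (m y) (deriv m y)⟫)
    (fun x _ => hGkey x) (hcont.intervalIntegrable 0 L)
  have hz : ∀ u : EuclideanSpace ℝ (Fin 3), cross3 u 0 = 0 := by
    intro u
    ext i
    fin_cases i <;> simp [cross3]
  rw [hint]
  simp only [hb0, hbL, hz, inner_zero_right, sub_zero, sub_self]
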